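/- The order ⊑ on H₀M X is ω-complete: for every ω-chain (d₀,e₀) ⊑ (d₁,e₁) ⊑ …, the pair (d,e) with d = supᵢ dᵢ and e t = eᵢ t whenever eᵢ t ≠ none for some i, and e t = none otherwise, is a well-defined element of H₀M X and is the least upper bound of the chain with respect to ⊑. -/
import Mathlib


open scoped ENNReal NNReal
open Classical

universe u v w

/-- Raw trajectories: a duration in `ℝ≥0∞` and a partial evolution `ℝ≥0 → Option X`. -/
abbrev Traj (X : Type u) := ℝ≥0∞ × (ℝ≥0 → Option X)

/-- The flattening condition: if the duration is finite, the evolution is constant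
from the duration onwards.  Membership in `H₀M X` means exactly `Flat`. -/
def Flat {X : Type u} (p : Traj X) : Prop :=
  ∀ t : ℝ≥0, p.1 ≤ (t : ℝ≥0∞) → p.2 t = p.2 p.1.toNNReal

/-- The unit of `H₀M`. -/
def eta {X : Type u} (x : X) : Traj X := (0, fun _ => some x)

/-- The Kleisli lifting `f^†` of the monad `H₀M`. -/
noncomputable def kl {X : Type u} {Y : Type v} (f : X → Traj Y) (p : Traj X) : Traj Y :=
  if p.1 = ⊤ then (p.1, fun t => (p.2 t).bind fun x' => (f x').2 0)
  else
    match p.2 p.1.toNNReal with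
    | none => (p.1, fun t => (p.2 t).bind fun x' => (f x').2 0)
    | some x =>
        (p.1 + (f x).1,
          fun t =>
            if (t : ℝ≥0∞) < p.1 then (p.2 t).bind fun x' => (f x').2 0
            else (f x).2 (t - p.1.toNNReal))

/-- Membership in `H₊ X ⊆ H₀M X`: the evolution is not everywhere `none`, and it is
defined at every time instant strictly below the duration. -/
def memHp {X : Type u} (p : Traj X) : Prop :=
  p.2 ≠ (fun _ => none) ∧ ∀ t : ℝ≥0, (t : ℝ≥0∞) < p.1 → p.2 t ≠ none

/-- Membership in `H X ⊆ H₀M X`: either the evolution is total, or the duration is `∞`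
and the domain of the evolution is downward closed. -/
def memH {X : Type u} (p : Traj X) : Prop :=
  (∀ t, p.2 t ≠ none) ∨
    (p.1 = ⊤ ∧ ∀ s t : ℝ≥0, s ≤ t → p.2 t ≠ none → p.2 s ≠ none)

/-- The approximation order `⊑` on `H₀M X`. -/
def TrajLE {X : Type u} (p q : Traj X) : Prop :=
  p.1 ≤ q.1 ∧ (∀ t, p.2 t ≠ none → q.2 t = p.2 t) ∧
    (p.1 ≠ ⊤ → p.2 p.1.toNNReal ≠ none → p.1 = q.1)

/-- Join of an ω-chain in `H₀M X`: the duration is the supremum of the durations, and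
the evolution at `t` is the common value `(c i).2 t` whenever it is `≠ none` for some
`i`, and `none` otherwise. -/
noncomputable def chainJoin {X : Type u} (c : ℕ → Traj X) : Traj X :=
  (⨆ i, (c i).1,
    fun t => if h : ∃ i, (c i).2 t ≠ none then (c h.choose).2 t else none)

/-- `d⋆ = sup { s < d ∣ e is defined on [0, s) }`. -/
noncomputable def dstar {X : Type u} (p : Traj X) : ℝ≥0∞ :=
  sSup {s : ℝ≥0∞ | s < p.1 ∧ ∀ t : ℝ≥0, (t : ℝ≥0∞) < s → p.2 t ≠ none}

/-- The retraction `ρ : H₀M X → H₀M X` onto `H X`. -/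
noncomputable def rho {X : Type u} (p : Traj X) : Traj X :=
  ((if ∀ t, p.2 t ≠ none then p.1 else ⊤),
    fun t =>
      if (t : ℝ≥0∞) ≤ dstar p then p.2 t
      else if ∀ t', p.2 t' ≠ none then p.2 (dstar p).toNNReal else none)

/-- The iterates `f⁽ⁿ⁾` of `f : X → H₀M (Y ⊕ X)`. -/
noncomputable def iter {X Y : Type u} (f : X → Traj (Y ⊕ X)) : ℕ → X → Traj Y
  | 0, _ => (0, fun _ => none)
  | n + 1, x => kl (Sum.elim eta (iter f n)) (f x)

/-- The least-fixpoint iteration `f^‡ x = ⊔ₙ f⁽ⁿ⁾ x`. -/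
noncomputable def iterStar {X Y : Type u} (f : X → Traj (Y ⊕ X)) (x : X) : Traj Y :=
  chainJoin fun n => iter f n x

/-- `f : X → H₊ (A ⊕ B)` is progressive in `B` (guarded in the second summand). -/
def Prog {X : Type u} {A B : Type v} (f : X → Traj (A ⊕ B)) : Prop :=
  ∀ x, ∃ a : A, (f x).2 0 = some (Sum.inl a)


section Aux
variable {X : Type u}

lemma trajLE_refl (p : Traj X) : TrajLE p p :=
  ⟨le_rfl, fun _ _ => rfl, fun _ _ => rfl⟩

lemma trajLE_trans {p q r : Traj X} (h1 : TrajLE p q) (h2 : TrajLE q r) : TrajLE p r := by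
  obtain ⟨hd1, he1, hs1⟩ := h1
  obtain ⟨hd2, he2, hs2⟩ := h2
  refine ⟨hd1.trans hd2, fun t ht => ?_, fun hfin hdef => ?_⟩
  · rw [he2 t (by rw [he1 t ht]; exact ht), he1 t ht]
  · have h : p.1 = q.1 := hs1 hfin hdef
    have h2' : q.1 = r.1 := by
      apply hs2 (h ▸ hfin)
      rw [← h, he1 _ hdef]; exact hdef
    rw [h, h2']

lemma chain_mono (c : ℕ → Traj X) (hchain : ∀ i, TrajLE (c i) (c (i + 1))) :
    ∀ i j, i ≤ j → TrajLE (c i) (c j) := by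
  intro i j hij
  induction hij with
  | refl => exact trajLE_refl _
  | step _ ih => exact trajLE_trans ih (hchain _)

lemma chain_agree (c : ℕ → Traj X) (hchain : ∀ i, TrajLE (c i) (c (i + 1)))
    {i j : ℕ} {t : ℝ≥0} (hi : (c i).2 t ≠ none) (hj : (c j).2 t ≠ none) :
    (c i).2 t = (c j).2 t := by
  rcases le_total i j with h | h
  · exact ((chain_mono c hchain i j h).2.1 t hi).symm
  · exact (chain_mono c hchain j i h).2.1 t hj

lemma join_eval (c : ℕ → Traj X) (hchain : ∀ i, TrajLE (c i) (c (i + 1)))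
    {i : ℕ} {t : ℝ≥0} (hi : (c i).2 t ≠ none) :
    (chainJoin c).2 t = (c i).2 t := by
  have hex : ∃ k, (c k).2 t ≠ none := ⟨i, hi⟩
  simp only [chainJoin, dif_pos hex]
  exact chain_agree c hchain hex.choose_spec hi

lemma sup_eq (c : ℕ → Traj X) (hchain : ∀ i, TrajLE (c i) (c (i + 1)))
    {i : ℕ} (hfin : (c i).1 ≠ ⊤) (hd : (c i).2 (c i).1.toNNReal ≠ none) :
    (⨆ j, (c j).1) = (c i).1 := by
  have hstab : ∀ j, i ≤ j → (c j).1 = (c i).1 := by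
    intro j hij
    induction hij with
    | refl => rfl
    | @step n hn ih =>
      have hfn : (c n).1 ≠ ⊤ := ih ▸ hfin
      have hdn : (c n).2 (c n).1.toNNReal ≠ none := by
        rw [ih, (chain_mono c hchain i n hn).2.1 _ hd]
        exact hd
      rw [← (hchain n).2.2 hfn hdn, ih]
  apply le_antisymm
  · apply iSup_le; intro j
    rcases le_total j i with h | h
    · exact (chain_mono c hchain j i h).1
    · exact (hstab j h).le
  · exact le_iSup (fun j => (c j).1) i

end Aux

/-- `⊑` is ω-complete on `H₀M X`: the join of an ω-chain is a well-defined element of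
`H₀M X` (its evolution agrees with any defined value of the chain and is `none` where
the whole chain is undefined) and it is the least upper bound of the chain. -/
theorem TrajLE_omega_complete (X : Type u) (c : ℕ → Traj X)
    (hflat : ∀ i, Flat (c i)) (hchain : ∀ i, TrajLE (c i) (c (i + 1))) :
    (chainJoin c).1 = ⨆ i, (c i).1 ∧
    (∀ (t : ℝ≥0) (i : ℕ), (c i).2 t ≠ none → (chainJoin c).2 t = (c i).2 t) ∧
    (∀ t : ℝ≥0, (∀ i, (c i).2 t = none) → (chainJoin c).2 t = none) ∧
    Flat (chainJoin c) ∧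
    (∀ i, TrajLE (c i) (chainJoin c)) ∧
    (∀ q : Traj X, Flat q → (∀ i, TrajLE (c i) q) → TrajLE (chainJoin c) q) := by
  have hJ1 : (chainJoin c).1 = ⨆ i, (c i).1 := rfl
  have hagree : ∀ (t : ℝ≥0) (i : ℕ), (c i).2 t ≠ none → (chainJoin c).2 t = (c i).2 t :=
    fun t i hi => join_eval c hchain hi
  have hnone : ∀ t : ℝ≥0, (∀ i, (c i).2 t = none) → (chainJoin c).2 t = none := by
    intro t h
    have : ¬ ∃ i, (c i).2 t ≠ none := by push_neg; exact h
    simp only [chainJoin, dif_neg this]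
  have hflatJ : Flat (chainJoin c) := by
    intro t ht
    have hdt : (⨆ i, (c i).1) ≤ (t : ℝ≥0∞) := ht
    have hdfin : (⨆ i, (c i).1) ≠ ⊤ :=
      fun h => ENNReal.coe_ne_top (top_le_iff.mp (h ▸ hdt))
    have hdc : (((⨆ i, (c i).1).toNNReal : ℝ≥0) : ℝ≥0∞) = ⨆ i, (c i).1 :=
      ENNReal.coe_toNNReal hdfin
    by_cases hex : ∃ i, (c i).2 t ≠ none
    · obtain ⟨i, hi⟩ := hex
      have hle : (c i).1 ≤ (t : ℝ≥0∞) := (le_iSup (fun j => (c j).1) i).trans hdt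
      have h1 := hflat i t hle
      have hfin_i : (c i).1 ≠ ⊤ :=
        fun h => ENNReal.coe_ne_top (top_le_iff.mp (h ▸ hle))
      have hdi : (c i).2 (c i).1.toNNReal ≠ none := h1 ▸ hi
      have hsup : (⨆ j, (c j).1) = (c i).1 := sup_eq c hchain hfin_i hdi
      have h2 : (c i).2 (chainJoin c).1.toNNReal ≠ none := by
        show (c i).2 (⨆ j, (c j).1).toNNReal ≠ none
        rw [hsup]; exact hdi
      rw [hagree t i hi, join_eval c hchain h2]
      show (c i).2 t = (c i).2 (⨆ j, (c j).1).toNNReal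
      rw [hsup, h1]
    · push_neg at hex
      rw [hnone t hex]
      by_cases hex2 : ∃ i, (c i).2 (⨆ j, (c j).1).toNNReal ≠ none
      · exfalso
        obtain ⟨i, hi⟩ := hex2
        have hle : (c i).1 ≤ (((⨆ j, (c j).1).toNNReal : ℝ≥0) : ℝ≥0∞) := by
          rw [hdc]; exact le_iSup (fun j => (c j).1) i
        have h1 := hflat i _ hle
        have hle2 : (c i).1 ≤ (t : ℝ≥0∞) := (le_iSup (fun j => (c j).1) i).trans hdt
        have h2 := hflat i t hle2
        exact hi (by rw [h1, ← h2, hex i])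
      · exact ((hnone _ (by push_neg at hex2; exact hex2))).symm
  refine ⟨hJ1, hagree, hnone, hflatJ, fun i => ?_, fun q hqflat hub => ?_⟩
  · refine ⟨le_iSup (fun j => (c j).1) i, fun t ht => hagree t i ht, fun hfin hd => ?_⟩
    exact (sup_eq c hchain hfin hd).symm
  · refine ⟨iSup_le fun i => (hub i).1, fun t ht => ?_, fun hfin hd => ?_⟩
    · have hex : ∃ i, (c i).2 t ≠ none := by
        by_contra h
        push_neg at h
        exact ht (hnone t h)
      obtain ⟨i, hi⟩ := hex
      rw [hagree t i hi] at ht ⊢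
      exact (hub i).2.1 t hi
    · have hex : ∃ i, (c i).2 (chainJoin c).1.toNNReal ≠ none := by
        by_contra h
        push_neg at h
        exact hd (hnone _ h)
      obtain ⟨i, hi⟩ := hex
      have hdc : (((⨆ j, (c j).1).toNNReal : ℝ≥0) : ℝ≥0∞) = ⨆ j, (c j).1 :=
        ENNReal.coe_toNNReal hfin
      have hle : (c i).1 ≤ (((⨆ j, (c j).1).toNNReal : ℝ≥0) : ℝ≥0∞) := by
        rw [hdc]; exact le_iSup (fun j => (c j).1) i
      have h1 := hflat i _ hle
      have hdi : (c i).2 (c i).1.toNNReal ≠ none := by rw [← h1]; exact hi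
      have hfin_i : (c i).1 ≠ ⊤ := by
        intro h
        rw [h] at hle
        exact ENNReal.coe_ne_top (top_le_iff.mp hle)
      have hsup : (⨆ j, (c j).1) = (c i).1 := sup_eq c hchain hfin_i hdi
      show (⨆ j, (c j).1) = q.1
      rw [hsup]
      exact (hub i).2.2 hfin_i hdi
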